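/- Let d ≥ 1, let C : ℝ^d → ℝ be continuous with 0 < C(0) and |C(x)| ≤ C(0) for all x, and let ℓ_C > 0 be such that C(x) > 0 whenever |x|_∞ ≤ ℓ_C/2. Then the Wegner constant W(E) satisfies lim_{E → +∞} W(E)/E^{d/2} = 3^d e^{1/(2π)} / √(2π C(0)). -/

import Mathlib

open MeasureTheory Real Filter

/-- The length `ℓ_E := min{|E|^{-1/2}, ℓ_C}`. -/
noncomputable def ellE (ℓC E : ℝ) : ℝ := min (|E| ^ (-(1 : ℝ) / 2)) ℓC

/-- `b_E := inf{C(x)/C(0) : |x|_∞ < ℓ_E/2}`. -/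
noncomputable def bE (d : ℕ) (C : (Fin d → ℝ) → ℝ) (ℓC E : ℝ) : ℝ :=
  sInf {r : ℝ | ∃ x : Fin d → ℝ, ‖x‖ < ellE ℓC E / 2 ∧ r = C x / C 0}

/-- `C_E := C(0)(2 - b_E²)`. -/
noncomputable def CE (d : ℕ) (C : (Fin d → ℝ) → ℝ) (ℓC E : ℝ) : ℝ :=
  C 0 * (2 - (bE d C ℓC E) ^ 2)

/-- `t_E := (2C_E)^{-1}(-E + √(E² + 2C_E/π))`. -/
noncomputable def tE (d : ℕ) (C : (Fin d → ℝ) → ℝ) (ℓC E : ℝ) : ℝ :=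
  (2 * CE d C ℓC E)⁻¹ * (-E + Real.sqrt (E ^ 2 + 2 * CE d C ℓC E / Real.pi))

/-- The Wegner constant
`W(E) := exp(t_E E + t_E² C_E/2)/(√(2π C(0)) b_E) · (2/ℓ_E + (2π t_E)^{-1/2})^d`. -/
noncomputable def wegnerW (d : ℕ) (C : (Fin d → ℝ) → ℝ) (ℓC E : ℝ) : ℝ :=
  Real.exp (tE d C ℓC E * E + (tE d C ℓC E) ^ 2 * CE d C ℓC E / 2) /
      (Real.sqrt (2 * Real.pi * C 0) * bE d C ℓC E) *
    (2 / ellE ℓC E + (2 * Real.pi * tE d C ℓC E) ^ (-(1 : ℝ) / 2)) ^ d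

section Aux

variable {d : ℕ} {C : (Fin d → ℝ) → ℝ} {ℓC : ℝ}

lemma ellE_pos (hℓC : 0 < ℓC) {E : ℝ} (hE : 0 < E) : 0 < ellE ℓC E :=
  lt_min (Real.rpow_pos_of_pos (abs_pos.2 hE.ne') _) hℓC

lemma ellE_le {E : ℝ} (hE : 0 < E) : ellE ℓC E ≤ E ^ (-(1 : ℝ) / 2) := by
  rw [ellE, abs_of_pos hE]; exact min_le_left _ _

lemma rpow_neg_half_tendsto : Tendsto (fun E : ℝ => E ^ (-(1 : ℝ) / 2)) atTop (nhds 0) := by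
  rw [show (-(1 : ℝ) / 2) = -(1 / 2) by norm_num]
  exact tendsto_rpow_neg_atTop (by norm_num)

lemma ellE_tendsto (hℓC : 0 < ℓC) : Tendsto (fun E => ellE ℓC E) atTop (nhds 0) := by
  apply squeeze_zero' ?_ ?_ rpow_neg_half_tendsto
  · filter_upwards [eventually_gt_atTop 0] with E hE using (ellE_pos hℓC hE).le
  · filter_upwards [eventually_gt_atTop 0] with E hE using ellE_le hE

lemma bE_tendsto (hC : Continuous C) (hC0 : 0 < C 0) (hCbd : ∀ x, |C x| ≤ C 0)
    (hℓC : 0 < ℓC) : Tendsto (fun E => bE d C ℓC E) atTop (nhds 1) := by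
  rw [Metric.tendsto_atTop]
  intro ε hε
  obtain ⟨δ, hδpos, hδ⟩ := Metric.continuousAt_iff.1 (hC.continuousAt (x := 0))
    (ε / 2 * C 0) (by positivity)
  have h1 : ∀ᶠ E in atTop, ellE ℓC E < δ :=
    ((ellE_tendsto hℓC).eventually_lt_const hδpos)
  obtain ⟨N, hN⟩ := eventually_atTop.1 (h1.and (eventually_gt_atTop 0))
  refine ⟨N, fun E hE => ?_⟩
  obtain ⟨hEδ, hEpos⟩ := hN E hE
  have hℓpos : 0 < ellE ℓC E := ellE_pos hℓC hEpos
  have hmem0 : (1 : ℝ) ∈ {r : ℝ | ∃ x : Fin d → ℝ, ‖x‖ < ellE ℓC E / 2 ∧ r = C x / C 0} :=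
    ⟨0, by simpa using half_pos hℓpos, (div_self hC0.ne').symm⟩
  have hbdd : BddBelow {r : ℝ | ∃ x : Fin d → ℝ, ‖x‖ < ellE ℓC E / 2 ∧ r = C x / C 0} := by
    refine ⟨-1, fun r hr => ?_⟩
    obtain ⟨x, hx, rfl⟩ := hr
    rw [le_div_iff₀ hC0]
    have := (abs_le.1 (hCbd x)).1
    linarith
  have hub : bE d C ℓC E ≤ 1 := csInf_le hbdd hmem0
  have hlb : 1 - ε / 2 ≤ bE d C ℓC E := by
    refine le_csInf ⟨1, hmem0⟩ ?_
    rintro r ⟨x, hx, rfl⟩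
    have hxδ : dist x 0 < δ := by
      rw [dist_zero_right]; linarith
    have h2 := hδ hxδ
    rw [Real.dist_eq] at h2
    have h3 := (abs_lt.1 h2).1
    rw [le_div_iff₀ hC0]
    nlinarith
  rw [Real.dist_eq, abs_lt]
  constructor <;> linarith

lemma CE_tendsto (hC : Continuous C) (hC0 : 0 < C 0) (hCbd : ∀ x, |C x| ≤ C 0)
    (hℓC : 0 < ℓC) : Tendsto (fun E => CE d C ℓC E) atTop (nhds (C 0)) := by
  have h := tendsto_const_nhds (x := C 0) (f := atTop (α := ℝ)) |>.mul
    ((tendsto_const_nhds (x := (2 : ℝ))).sub ((bE_tendsto hC hC0 hCbd hℓC).pow 2))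
  have : C 0 * (2 - (1:ℝ)^2) = C 0 := by norm_num
  rw [this] at h
  exact h

lemma tE_pos {E : ℝ} (hE : 0 < E) (hCE : 0 < CE d C ℓC E) : 0 < tE d C ℓC E := by
  have hπ := Real.pi_pos
  have h2 : 0 < 2 * CE d C ℓC E / Real.pi := by positivity
  have hlt : E < Real.sqrt (E ^ 2 + 2 * CE d C ℓC E / Real.pi) :=
    (Real.lt_sqrt hE.le).2 (by linarith)
  have : 0 < -E + Real.sqrt (E ^ 2 + 2 * CE d C ℓC E / Real.pi) := by linarith
  exact mul_pos (inv_pos.2 (by linarith)) this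

lemma tE_mul_eq {E : ℝ} (hE : 0 < E) (hCE : 0 < CE d C ℓC E) :
    tE d C ℓC E * E =
      (Real.pi * ((E + Real.sqrt (E ^ 2 + 2 * CE d C ℓC E / Real.pi)) / E))⁻¹ := by
  have hπ := Real.pi_pos
  set c := CE d C ℓC E with hc
  set s := Real.sqrt (E ^ 2 + 2 * c / Real.pi) with hs
  have hs2 : s ^ 2 = E ^ 2 + 2 * c / Real.pi := Real.sq_sqrt (by positivity)
  have h2 : 0 < 2 * c / Real.pi := by positivity
  have hsE : E < s := (Real.lt_sqrt hE.le).2 (by linarith)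
  have hEs : 0 < E + s := by linarith
  rw [tE, ← hc, ← hs]
  have hs2' : s ^ 2 * Real.pi = E ^ 2 * Real.pi + 2 * c := by
    rw [hs2]; field_simp
  field_simp
  linear_combination hs2'

lemma tE_mul_tendsto (hC : Continuous C) (hC0 : 0 < C 0) (hCbd : ∀ x, |C x| ≤ C 0)
    (hℓC : 0 < ℓC) :
    Tendsto (fun E => tE d C ℓC E * E) atTop (nhds (1 / (2 * Real.pi))) := by
  have hπ := Real.pi_pos
  have hCE := CE_tendsto hC hC0 hCbd hℓC
  have hCEev : ∀ᶠ E in atTop, 0 < CE d C ℓC E := hCE.eventually (eventually_gt_nhds hC0)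
  -- the ratio (E + s)/E tends to 2
  have hsq : Tendsto (fun E : ℝ => 1 + Real.sqrt (1 + 2 * CE d C ℓC E / Real.pi * (E ^ 2)⁻¹))
      atTop (nhds 2) := by
    have hinner : Tendsto (fun E : ℝ => 1 + 2 * CE d C ℓC E / Real.pi * (E ^ 2)⁻¹)
        atTop (nhds 1) := by
      have h1 : Tendsto (fun E : ℝ => 2 * CE d C ℓC E / Real.pi) atTop
          (nhds (2 * C 0 / Real.pi)) := by
        exact ((tendsto_const_nhds.mul hCE).div_const Real.pi)
      have h2 : Tendsto (fun E : ℝ => (E ^ 2)⁻¹) atTop (nhds 0) :=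
        (tendsto_pow_atTop two_ne_zero).inv_tendsto_atTop
      have := h1.mul h2
      rw [mul_zero] at this
      simpa using tendsto_const_nhds.add this
    have := (Real.continuous_sqrt.continuousAt.tendsto.comp hinner)
    rw [Real.sqrt_one] at this
    have h2 := tendsto_const_nhds (x := (1 : ℝ)) (f := atTop (α := ℝ)) |>.add this
    norm_num at h2
    exact h2
  have hratio : Tendsto
      (fun E : ℝ => (E + Real.sqrt (E ^ 2 + 2 * CE d C ℓC E / Real.pi)) / E)
      atTop (nhds 2) := by
    apply hsq.congr'
    filter_upwards [eventually_gt_atTop 0, hCEev] with E hE hc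
    have h0 : (0 : ℝ) ≤ E ^ 2 + 2 * CE d C ℓC E / Real.pi := by positivity
    have h1 : (1 : ℝ) + 2 * CE d C ℓC E / Real.pi * (E ^ 2)⁻¹ =
        (E ^ 2 + 2 * CE d C ℓC E / Real.pi) / E ^ 2 := by
      field_simp
    rw [h1, Real.sqrt_div h0, Real.sqrt_sq hE.le, add_div, div_self hE.ne']
  have hmain : Tendsto
      (fun E : ℝ => (Real.pi *
        ((E + Real.sqrt (E ^ 2 + 2 * CE d C ℓC E / Real.pi)) / E))⁻¹)
      atTop (nhds ((Real.pi * 2)⁻¹)) :=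
    (tendsto_const_nhds.mul hratio).inv₀ (by positivity)
  have heq : (Real.pi * 2)⁻¹ = 1 / (2 * Real.pi) := by ring
  rw [heq] at hmain
  apply hmain.congr'
  filter_upwards [eventually_gt_atTop 0, hCEev] with E hE hc
  exact (tE_mul_eq hE hc).symm

lemma aux_div1 (t c E : ℝ) (hE : E ≠ 0) :
    (t * E) ^ 2 * c * (E ^ 2)⁻¹ / 2 = t ^ 2 * c / 2 := by
  field_simp

lemma aux_div2 (x y : ℝ) (hx : x ≠ 0) : (2 / x⁻¹ + y) / x = 2 + y * x⁻¹ := by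
  field_simp

end Aux

/-- High-energy asymptotics of the Wegner constant:
`lim_{E → +∞} W(E)/E^{d/2} = 3^d e^{1/(2π)} / √(2π C(0))`. -/
theorem wegner_constant_high_energy_asymptotics
    (d : ℕ) (hd : 1 ≤ d) (C : (Fin d → ℝ) → ℝ) (hC : Continuous C)
    (hC0pos : 0 < C 0) (hCbd : ∀ x, |C x| ≤ C 0)
    (ℓC : ℝ) (hℓC : 0 < ℓC)
    (hCpos : ∀ x : Fin d → ℝ, ‖x‖ ≤ ℓC / 2 → 0 < C x) :
    Filter.Tendsto (fun E : ℝ => wegnerW d C ℓC E / E ^ ((d : ℝ) / 2))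
      Filter.atTop
      (nhds ((3 : ℝ) ^ d * Real.exp (1 / (2 * Real.pi)) / Real.sqrt (2 * Real.pi * C 0))) := by
  have hπ := Real.pi_pos
  have hbE := bE_tendsto hC hC0pos hCbd hℓC
  have hCE := CE_tendsto hC hC0pos hCbd hℓC
  have htEE := tE_mul_tendsto hC hC0pos hCbd hℓC
  have hCEev : ∀ᶠ E in atTop, 0 < CE d C ℓC E := hCE.eventually (eventually_gt_nhds hC0pos)
  have hsqrtpos : 0 < Real.sqrt (2 * Real.pi * C 0) := Real.sqrt_pos.2 (by positivity)
  have harg : Tendsto (fun E => tE d C ℓC E * E + (tE d C ℓC E) ^ 2 * CE d C ℓC E / 2)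
      atTop (nhds (1 / (2 * Real.pi))) := by
    have h2 : Tendsto (fun E : ℝ => (tE d C ℓC E * E) ^ 2 * CE d C ℓC E * (E ^ 2)⁻¹ / 2)
        atTop (nhds 0) := by
      have hinv : Tendsto (fun E : ℝ => (E ^ 2)⁻¹) atTop (nhds 0) :=
        (tendsto_pow_atTop two_ne_zero).inv_tendsto_atTop
      have h3 := (((htEE.pow 2).mul hCE).mul hinv).div_const 2
      simpa using h3
    have h := htEE.add h2
    rw [add_zero] at h
    apply h.congr'
    filter_upwards [eventually_gt_atTop 0] with E hE
    rw [aux_div1 _ _ _ hE.ne']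
  have hA : Tendsto (fun E => Real.exp (tE d C ℓC E * E + (tE d C ℓC E) ^ 2 * CE d C ℓC E / 2) /
      (Real.sqrt (2 * Real.pi * C 0) * bE d C ℓC E)) atTop
      (nhds (Real.exp (1 / (2 * Real.pi)) / Real.sqrt (2 * Real.pi * C 0))) := by
    have hnum := Real.continuous_exp.continuousAt.tendsto.comp harg
    have hden := (tendsto_const_nhds (x := Real.sqrt (2 * Real.pi * C 0))
      (f := atTop (α := ℝ))).mul hbE
    rw [mul_one] at hden
    exact hnum.div hden hsqrtpos.ne'
  have hBinner : Tendsto (fun E => 2 * Real.pi * (tE d C ℓC E * E)) atTop (nhds 1) := by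
    have h := (tendsto_const_nhds (x := 2 * Real.pi) (f := atTop (α := ℝ))).mul htEE
    have heq : 2 * Real.pi * (1 / (2 * Real.pi)) = 1 := by field_simp
    rwa [heq] at h
  have hB : Tendsto (fun E => (2 + (2 * Real.pi * (tE d C ℓC E * E)) ^ (-(1:ℝ)/2)) ^ d)
      atTop (nhds (3 ^ d)) := by
    have h1 := hBinner.rpow_const (p := -(1:ℝ)/2) (Or.inl one_ne_zero)
    rw [Real.one_rpow] at h1
    have h2 := (tendsto_const_nhds (x := (2:ℝ)) (f := atTop (α := ℝ))).add h1
    have h3 : (2:ℝ) + 1 = 3 := by norm_num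
    rw [h3] at h2
    exact h2.pow d
  have hmain := hA.mul hB
  have hval : Real.exp (1/(2*Real.pi)) / Real.sqrt (2*Real.pi*C 0) * 3 ^ d =
      3 ^ d * Real.exp (1/(2*Real.pi)) / Real.sqrt (2*Real.pi*C 0) := by ring
  rw [hval] at hmain
  apply hmain.congr'
  have hℓev : ∀ᶠ E in atTop, |E| ^ (-(1:ℝ)/2) ≤ ℓC := by
    filter_upwards [rpow_neg_half_tendsto.eventually_le_const hℓC, eventually_gt_atTop 0]
      with E h1 h2
    rwa [abs_of_pos h2]
  filter_upwards [eventually_gt_atTop 0, hCEev, hℓev] with E hE hCEp hℓ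
  have htp : 0 < tE d C ℓC E := tE_pos hE hCEp
  have hE12 : (0:ℝ) < E ^ ((1:ℝ)/2) := Real.rpow_pos_of_pos hE _
  have hellE : ellE ℓC E = E ^ (-(1:ℝ)/2) := by
    rw [ellE, abs_of_pos hE]
    exact min_eq_left (by rwa [abs_of_pos hE] at hℓ)
  have hEpow : E ^ ((d : ℝ)/2) = (E ^ ((1:ℝ)/2)) ^ d := by
    rw [← Real.rpow_natCast (E ^ ((1:ℝ)/2)) d, ← Real.rpow_mul hE.le]
    congr 1
    ring
  have hneg : E ^ (-(1:ℝ)/2) = (E ^ ((1:ℝ)/2))⁻¹ := by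
    rw [show (-(1:ℝ)/2) = -((1:ℝ)/2) by norm_num, Real.rpow_neg hE.le]
  have hX : (2 / ellE ℓC E + (2 * Real.pi * tE d C ℓC E) ^ (-(1:ℝ)/2)) / E ^ ((1:ℝ)/2)
      = 2 + (2 * Real.pi * (tE d C ℓC E * E)) ^ (-(1:ℝ)/2) := by
    have h2 : (2 * Real.pi * tE d C ℓC E) ^ (-(1:ℝ)/2) * E ^ (-(1:ℝ)/2)
        = (2 * Real.pi * (tE d C ℓC E * E)) ^ (-(1:ℝ)/2) := by
      rw [← Real.mul_rpow (by positivity) hE.le, mul_assoc]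
    rw [hellE, hneg, ← h2, hneg]
    exact aux_div2 _ _ hE12.ne'
  rw [wegnerW, hEpow, ← hX, div_pow]
  exact (mul_div_assoc _ _ _).symm
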